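/- Let 0 < β₁ < β₂ and let a be the unique positive zero of F_{β₁,β₂}, so that a ∈ (0, 1/β₁). Then the function φ(τ) := (aβ₁ − 1)(e^{aτ} − 1)/a² + τ/a is strictly positive for every τ in the open interval (0, β₁+β₂). -/

import Mathlib

/-- Hamilton football angle function: `F β₁ β₂ x = β₁x − 1 + (β₂x + 1) e^{−x(β₁+β₂)}`. -/
noncomputable def F (β₁ β₂ x : ℝ) : ℝ :=
  β₁ * x - 1 + (β₂ * x + 1) * Real.exp (-x * (β₁ + β₂))

/-- Key inequality: if `c e^S = S + c` with `c, S > 0`, then `c(e^s − 1) < s` for `0 < s < S`. -/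
lemma key_ineq (c S s : ℝ) (hc : 0 < c) (hS : 0 < S)
    (hkey : c * Real.exp S = S + c) (hs : 0 < s) (hsS : s < S) :
    c * (Real.exp s - 1) < s := by
  have hp : 0 < (S - s) / S := div_pos (by linarith) hS
  have hq : 0 < s / S := div_pos hs hS
  have hpq : (S - s) / S + s / S = 1 := by field_simp; ring
  have hconv := strictConvexOn_exp.2 (Set.mem_univ (0 : ℝ)) (Set.mem_univ S)
    (by linarith : (0 : ℝ) ≠ S) hp hq hpq
  simp only [smul_eq_mul, mul_zero, zero_add, Real.exp_zero, mul_one] at hconv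
  have hqs : s / S * S = s := by field_simp
  rw [hqs] at hconv
  -- hconv : exp s < (S - s)/S + (s/S) * exp S
  have h1 : c * Real.exp s < c * ((S - s) / S + s / S * Real.exp S) :=
    mul_lt_mul_of_pos_left hconv hc
  have h2 : c * ((S - s) / S + s / S * Real.exp S) = c + s := by
    have hSne : S ≠ 0 := ne_of_gt hS
    field_simp
    linear_combination s * hkey
  nlinarith [h1, h2]

theorem profile_positive (β₁ β₂ a : ℝ) (h₁ : 0 < β₁) (h₂ : β₁ < β₂)
    (ha : 0 < a) (ha' : a < 1 / β₁) (hz : F β₁ β₂ a = 0)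
    (huniq : ∀ y : ℝ, 0 < y → F β₁ β₂ y = 0 → y = a)
    (φ : ℝ → ℝ)
    (hφ : ∀ τ, φ τ = (a * β₁ - 1) * (Real.exp (a * τ) - 1) / a ^ 2 + τ / a) :
    ∀ τ ∈ Set.Ioo (0 : ℝ) (β₁ + β₂), 0 < φ τ := by
  intro τ hτ
  obtain ⟨hτ0, hτS⟩ := hτ
  set c : ℝ := 1 - a * β₁ with hc_def
  set S : ℝ := a * (β₁ + β₂) with hS_def
  have hab1 : a * β₁ < 1 := (lt_div_iff₀ h₁).mp ha'
  have hc : 0 < c := by simp [hc_def]; linarith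
  have hS : 0 < S := mul_pos ha (by linarith)
  -- derive the key equation from hz
  have hkey : c * Real.exp S = S + c := by
    unfold F at hz
    have hexp : Real.exp (-a * (β₁ + β₂)) = (Real.exp S)⁻¹ := by
      rw [← Real.exp_neg, hS_def]; congr 1; ring
    rw [hexp] at hz
    have hEpos : 0 < Real.exp S := Real.exp_pos S
    have : (β₂ * a + 1) = (1 - β₁ * a) * Real.exp S := by
      field_simp at hz ⊢
      nlinarith [hz, hEpos]
    have : c * Real.exp S = β₂ * a + 1 := by rw [this, hc_def]; ring
    rw [this]; simp [hS_def, hc_def]; ring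
  have hs : 0 < a * τ := mul_pos ha hτ0
  have hsS : a * τ < S := by
    rw [hS_def]; exact mul_lt_mul_of_pos_left hτS ha
  have hmain := key_ineq c S (a * τ) hc hS hkey hs hsS
  rw [hφ τ]
  have ha2 : (0:ℝ) < a ^ 2 := by positivity
  rw [div_add_div _ _ (ne_of_gt ha2) (ne_of_gt ha)]
  apply div_pos _ (by positivity)
  have haτ : τ * a ^ 2 = (a * τ) * a := by ring
  rw [hc_def] at hmain
  nlinarith [mul_lt_mul_of_pos_left hmain ha]
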